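/- Let k be a natural number, p a natural number with p ≥ R_k, and G a finite simple graph. Let v_0 be a vertex of G, let V_1 = N(v_0) be the set of neighbors of v_0, V_2 = V(G) \ V_1, and let W_2 = { u ∈ V_1 : |N(u) ∩ V_2| < p }. If |N(W_2) ∩ V_2| > (p−1)², then G contains a k-edge induced subgraph. Here N(W_2) denotes the union of the neighborhoods N(u) over all u ∈ W_2. -/

import Mathlib

/-- `G` contains a `k`-edge induced subgraph: there is a nonempty set `S` of vertices
such that the number of edges of `G` with both endpoints in `S` is exactly `k`. -/
def HasKEdgeInducedSubgraph {V : Type*} (G : SimpleGraph V) (k : ℕ) : Prop :=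
  ∃ S : Finset V, S.Nonempty ∧ {e ∈ G.edgeSet | ∀ v ∈ e, v ∈ S}.ncard = k

/-- The Ramsey number `R_k`: the least `N` such that every finite simple graph on at least `N`
vertices contains a clique of size `k` or an independent set of size `k`. -/
noncomputable def ramseyNumber (k : ℕ) : ℕ :=
  sInf {N : ℕ | ∀ (V : Type) (inst : Fintype V) (G : SimpleGraph V),
    N ≤ @Fintype.card V inst →
    (∃ S : Finset V, S.card = k ∧ ∀ u ∈ S, ∀ w ∈ S, u ≠ w → G.Adj u w) ∨
    (∃ S : Finset V, S.card = k ∧ ∀ u ∈ S, ∀ w ∈ S, u ≠ w → ¬ G.Adj u w)}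

open Finset

namespace Claim2Aux

set_option linter.unusedSectionVars false
set_option linter.unusedVariables false

/-- Choice of the maximal `j` with `C(j,2) ≤ k`. -/
lemma exists_j (k : ℕ) (hk3 : 3 ≤ k) :
    ∃ j, 3 ≤ j ∧ j ≤ k ∧ j.choose 2 ≤ k ∧ k < (j+1).choose 2 ∧ j ≤ j.choose 2 := by
  classical
  have h32 : (3 : ℕ).choose 2 = 3 := by decide
  set P : ℕ → Prop := fun j => j.choose 2 ≤ k with hP
  have hP3 : P 3 := by rw [hP]; simpa [h32] using hk3
  refine ⟨Nat.findGreatest P k, Nat.le_findGreatest hk3 hP3, Nat.findGreatest_le k, ?_, ?_, ?_⟩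
  · exact Nat.findGreatest_spec (m := 3) hk3 hP3
  · set j := Nat.findGreatest P k with hj
    have hjk : j ≤ k := Nat.findGreatest_le k
    have hj3 : 3 ≤ j := Nat.le_findGreatest hk3 hP3
    have hjsucc : (j+1).choose 2 = j.choose 2 + j := by
      rw [Nat.choose_succ_succ]
      simp [Nat.choose_one_right]
      omega
    rcases Nat.lt_or_ge k (j+1) with hcase | hcase
    · have hjeq : j = k := by omega
      have h3k : 3 ≤ k.choose 2 := by
        calc (3:ℕ) = (3:ℕ).choose 2 := h32.symm
        _ ≤ k.choose 2 := Nat.choose_le_choose 2 hk3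
      rw [hjsucc, hjeq]
      omega
    · have := Nat.findGreatest_is_greatest (P := P) (k := j + 1) (by omega) hcase
      rw [hP] at this
      simp only [not_le] at this
      exact this
  · set j := Nat.findGreatest P k with hj
    have hj3 : 3 ≤ j := Nat.le_findGreatest hk3 hP3
    rw [Nat.choose_two_right]
    have h2 : 2 ≤ j - 1 := by omega
    have h1 : 2 * j ≤ j * (j - 1) := by
      calc 2 * j = j * 2 := by ring
      _ ≤ j * (j-1) := Nat.mul_le_mul_left j h2
    calc j = 2 * j / 2 := by omega
    _ ≤ j * (j-1) / 2 := Nat.div_le_div_right h1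

/-- Stopping point for the pendant-adding chain. -/
lemma exists_stop (h : ℕ → ℕ) (N' t : ℕ) (h0 : h 0 = 0)
    (hchain : ∀ σ < N', h (σ+1) ≤ h σ + σ) (htN : t ≤ N') :
    ∃ σ, σ ≤ N' ∧ h σ ≤ t ∧ t - h σ ≤ σ := by
  classical
  set P : ℕ → Prop := fun σ => h σ ≤ t with hP
  have hP0 : P 0 := show h 0 ≤ t by rw [h0]; exact Nat.zero_le t
  have hσsN : Nat.findGreatest P N' ≤ N' := Nat.findGreatest_le N'
  have hσsval : h (Nat.findGreatest P N') ≤ t :=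
    Nat.findGreatest_spec (m := 0) (Nat.zero_le N') hP0
  refine ⟨Nat.findGreatest P N', hσsN, hσsval, ?_⟩
  set σs := Nat.findGreatest P N' with hσs
  rcases Nat.lt_or_ge σs N' with hlt | hge
  · have hgt : ¬ P (σs + 1) := Nat.findGreatest_is_greatest (P := P) (n := N') (k := σs + 1) (by omega) (by omega)
    have hgt2 : ¬ (h (σs + 1) ≤ t) := hgt
    simp only [not_le] at hgt2
    have := hchain σs hlt
    omega
  · have hEq : σs = N' := by omega
    omega



/-- The Ramsey property for parameters `s`, `t` at `N` vertices. -/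
def RamseyProp (s t N : ℕ) : Prop :=
  ∀ (V : Type) (inst : Fintype V) (G : SimpleGraph V),
    N ≤ @Fintype.card V inst →
    (∃ S : Finset V, S.card = s ∧ ∀ u ∈ S, ∀ w ∈ S, u ≠ w → G.Adj u w) ∨
    (∃ S : Finset V, S.card = t ∧ ∀ u ∈ S, ∀ w ∈ S, u ≠ w → ¬ G.Adj u w)

lemma image_pairwise {W V : Type*} [DecidableEq V] {f : W → V} (hf : Function.Injective f)
    {S : Finset W} {R : V → V → Prop}
    (h : ∀ u ∈ S, ∀ w ∈ S, u ≠ w → R (f u) (f w)) :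
    ∀ u ∈ S.image f, ∀ w ∈ S.image f, u ≠ w → R u w := by
  intro u hu w hw hne
  obtain ⟨u', hu', rfl⟩ := Finset.mem_image.mp hu
  obtain ⟨w', hw', rfl⟩ := Finset.mem_image.mp hw
  exact h u' hu' w' hw' (fun hc => hne (by rw [hc]))

lemma ramsey_exists (s t : ℕ) : ∃ N, RamseyProp s t N := by
  classical
  suffices h : ∀ n s t, s + t ≤ n → ∃ N, RamseyProp s t N from h (s + t) s t le_rfl
  intro n
  induction n with
  | zero =>
    intro s t hst
    have hs : s = 0 := by omega
    exact ⟨0, fun V inst G _ => Or.inl ⟨∅, by simp [hs]⟩⟩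
  | succ n ih =>
    intro s t hst
    match s, t with
    | 0, t => exact ⟨0, fun V inst G _ => Or.inl ⟨∅, by simp⟩⟩
    | s+1, 0 => exact ⟨0, fun V inst G _ => Or.inr ⟨∅, by simp⟩⟩
    | s+1, t+1 =>
      obtain ⟨N₁, h₁⟩ := ih s (t+1) (by omega)
      obtain ⟨N₂, h₂⟩ := ih (s+1) t (by omega)
      refine ⟨N₁ + N₂ + 1, ?_⟩
      intro V inst G hcard
      classical
      have hpos : 0 < @Fintype.card V inst := by omega
      obtain ⟨v⟩ : Nonempty V := @Fintype.card_pos_iff V inst |>.mp hpos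
      set A : Finset V := Finset.univ.filter (fun u => G.Adj v u) with hA
      set B : Finset V := Finset.univ.filter (fun u => u ≠ v ∧ ¬ G.Adj v u) with hB
      have hvA : v ∉ A := by simp [hA]
      have hvB : v ∉ B := by simp [hB]
      have hdisjAB : Disjoint A B := by
        apply Finset.disjoint_left.mpr
        intro x hx hx'
        simp only [hA, Finset.mem_filter] at hx
        simp only [hB, Finset.mem_filter] at hx'
        exact hx'.2.2 hx.2
      have huniv : insert v (A ∪ B) = Finset.univ := by
        ext u
        simp only [Finset.mem_insert, Finset.mem_union, hA, hB, Finset.mem_filter,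
          Finset.mem_univ, true_and, iff_true]
        by_cases h1 : u = v
        · exact Or.inl h1
        · by_cases h2 : G.Adj v u
          · exact Or.inr (Or.inl h2)
          · exact Or.inr (Or.inr ⟨h1, h2⟩)
      have hcards : A.card + B.card + 1 = @Fintype.card V inst := by
        have h1 : (insert v (A ∪ B)).card = (A ∪ B).card + 1 := by
          rw [Finset.card_insert_of_notMem (by simp [hvA, hvB])]
        rw [huniv, Finset.card_univ] at h1
        have h2 : (A ∪ B).card = A.card + B.card := Finset.card_union_of_disjoint hdisjAB
        omega
      have hsplit : N₁ ≤ A.card ∨ N₂ ≤ B.card := by omega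
      rcases hsplit with hN | hN
      · -- many neighbors
        have hc : N₁ ≤ @Fintype.card {x // x ∈ A} (Fintype.ofFinset A (fun x => Iff.rfl)) := by
          rw [@Fintype.card_coe]  -- may need adjusting
          exact hN
        rcases h₁ {x // x ∈ A} _ (G.comap (Subtype.val)) hc with ⟨S, hScard, hSadj⟩ | ⟨S, hScard, hSadj⟩
        · -- clique of size s inside A; add v
          set SV := S.image (Subtype.val) with hSV
          have hinj : Function.Injective (Subtype.val : {x // x ∈ A} → V) := Subtype.val_injective
          have hSVcard : SV.card = s := by rw [hSV, Finset.card_image_of_injective _ hinj, hScard]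
          have hSVsub : ∀ x ∈ SV, x ∈ A := by
            intro x hx
            obtain ⟨x', _, rfl⟩ := Finset.mem_image.mp hx
            exact x'.2
          have hvSV : v ∉ SV := fun h => hvA (hSVsub v h)
          refine Or.inl ⟨insert v SV, ?_, ?_⟩
          · rw [Finset.card_insert_of_notMem hvSV, hSVcard]
          · intro u hu w hw hne
            rcases Finset.mem_insert.mp hu with rfl | hu' <;>
              rcases Finset.mem_insert.mp hw with h | hw'
            · exact absurd h.symm hne
            · have : w ∈ A := hSVsub w hw'
              simp only [hA, Finset.mem_filter] at this
              exact this.2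
            · subst h
              have : u ∈ A := hSVsub u hu'
              simp only [hA, Finset.mem_filter] at this
              exact G.adj_symm this.2
            · exact image_pairwise (R := G.Adj) hinj hSadj u hu' w hw' hne
        · -- independent set of size t+1 inside A
          refine Or.inr ⟨S.image Subtype.val, ?_, ?_⟩
          · rw [Finset.card_image_of_injective _ Subtype.val_injective, hScard]
          · exact image_pairwise (R := fun a b => ¬ G.Adj a b) Subtype.val_injective hSadj
      · -- many non-neighbors
        have hc : N₂ ≤ @Fintype.card {x // x ∈ B} (Fintype.ofFinset B (fun x => Iff.rfl)) := by
          rw [@Fintype.card_coe]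
          exact hN
        rcases h₂ {x // x ∈ B} _ (G.comap (Subtype.val)) hc with ⟨S, hScard, hSadj⟩ | ⟨S, hScard, hSadj⟩
        · refine Or.inl ⟨S.image Subtype.val, ?_, ?_⟩
          · rw [Finset.card_image_of_injective _ Subtype.val_injective, hScard]
          · exact image_pairwise (R := G.Adj) Subtype.val_injective hSadj
        · set SV := S.image (Subtype.val) with hSV
          have hinj : Function.Injective (Subtype.val : {x // x ∈ B} → V) := Subtype.val_injective
          have hSVcard : SV.card = t := by rw [hSV, Finset.card_image_of_injective _ hinj, hScard]
          have hSVsub : ∀ x ∈ SV, x ∈ B := by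
            intro x hx
            obtain ⟨x', _, rfl⟩ := Finset.mem_image.mp hx
            exact x'.2
          have hvSV : v ∉ SV := fun h => hvB (hSVsub v h)
          refine Or.inr ⟨insert v SV, ?_, ?_⟩
          · rw [Finset.card_insert_of_notMem hvSV, hSVcard]
          · intro u hu w hw hne
            rcases Finset.mem_insert.mp hu with rfl | hu' <;>
              rcases Finset.mem_insert.mp hw with h | hw'
            · exact absurd h.symm hne
            · have hwB : w ∈ B := hSVsub w hw'
              simp only [hB, Finset.mem_filter] at hwB
              exact hwB.2.2
            · subst h
              have huB : u ∈ B := hSVsub u hu'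
              simp only [hB, Finset.mem_filter] at huB
              exact fun hadj => huB.2.2 (G.adj_symm hadj)
            · exact image_pairwise (R := fun a b => ¬ G.Adj a b) hinj hSadj u hu' w hw' hne



variable {V : Type*} [Fintype V] [DecidableEq V] (G : SimpleGraph V) [DecidableRel G.Adj]

/-- The set of edges of `G` with both endpoints in `S`. -/
def inEdges (S : Finset V) : Set (Sym2 V) := {e ∈ G.edgeSet | ∀ v ∈ e, v ∈ S}

lemma inEdges_eq_empty {S : Finset V} (h : ∀ a ∈ S, ∀ b ∈ S, ¬ G.Adj a b) :
    inEdges G S = ∅ := by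
  ext e
  induction e using Sym2.ind with
  | _ a b =>
    simp only [inEdges, Set.mem_setOf_eq, Set.mem_empty_iff_false, iff_false, not_and]
    intro he hm
    exact h a (hm a (by simp)) b (hm b (by simp)) he

lemma ncard_inEdges_insert {S : Finset V} {v : V} (hv : v ∉ S) :
    (inEdges G (insert v S)).ncard
      = (inEdges G S).ncard + ((G.neighborFinset v ∩ S).card) := by
  classical
  have hsplit : inEdges G (insert v S)
      = inEdges G S ∪ (fun u => s(v, u)) '' ((G.neighborFinset v ∩ S : Finset V) : Set V) := by
    ext e
    induction e using Sym2.ind with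
    | _ a b =>
    constructor
    · rintro ⟨he, hm⟩
      by_cases hav : a = v
      · subst hav
        have hb : b ∈ insert a S := hm b (by simp)
        have hbv : b ≠ a := fun h => (G.loopless.irrefl a (h ▸ he))
        have hbS : b ∈ S := by
          rcases Finset.mem_insert.mp hb with h | h
          · exact absurd h hbv
          · exact h
        right
        refine ⟨b, ?_, rfl⟩
        simp only [Finset.coe_inter, Set.mem_inter_iff, Finset.mem_coe,
          SimpleGraph.mem_neighborFinset]
        exact ⟨he, hbS⟩
      · by_cases hbv : b = v
        · subst hbv
          have haS : a ∈ S := by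
            rcases Finset.mem_insert.mp (hm a (by simp)) with h | h
            · exact absurd h hav
            · exact h
          right
          refine ⟨a, ?_, Sym2.eq_swap⟩
          simp only [Finset.coe_inter, Set.mem_inter_iff, Finset.mem_coe,
            SimpleGraph.mem_neighborFinset]
          exact ⟨G.adj_symm he, haS⟩
        · left
          refine ⟨he, ?_⟩
          intro x hx
          rcases Sym2.mem_iff.mp hx with rfl | rfl
          · rcases Finset.mem_insert.mp (hm x (by simp)) with h | h
            · exact absurd h hav
            · exact h
          · rcases Finset.mem_insert.mp (hm x (by simp [Sym2.mem_iff])) with h | h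
            · exact absurd h hbv
            · exact h
    · rintro (⟨he, hm⟩ | ⟨u, hu, huv⟩)
      · exact ⟨he, fun x hx => Finset.mem_insert_of_mem (hm x hx)⟩
      · simp only [Finset.coe_inter, Set.mem_inter_iff, Finset.mem_coe,
          SimpleGraph.mem_neighborFinset] at hu
        rw [← huv]
        refine ⟨(G.mem_edgeSet).mpr hu.1, ?_⟩
        intro x hx
        rcases Sym2.mem_iff.mp hx with rfl | rfl
        · exact Finset.mem_insert_self _ _
        · exact Finset.mem_insert_of_mem hu.2
  have hdisj : Disjoint (inEdges G S)
      ((fun u => s(v, u)) '' ((G.neighborFinset v ∩ S : Finset V) : Set V)) := by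
    rw [Set.disjoint_left]
    rintro e ⟨_, hm⟩ ⟨u, _, rfl⟩
    exact hv (hm v (by simp))
  have hinj : Set.InjOn (fun u => s(v, u)) ((G.neighborFinset v ∩ S : Finset V) : Set V) := by
    intro a _ b _ hab
    simpa using Sym2.congr_right.mp hab
  rw [hsplit, Set.ncard_union_eq hdisj (Set.toFinite _) (Set.toFinite _),
    Set.ncard_image_of_injOn hinj, Set.ncard_coe_finset]



/-- Attach a clique (given as a list) to a pendant part `P`. -/
lemma ncard_inEdges_list_union (P : Finset V) (L : List V) (hnd : L.Nodup)
    (hdisjP : ∀ a ∈ L, a ∉ P)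
    (hadj : L.Pairwise G.Adj) :
    (inEdges G (L.toFinset ∪ P)).ncard
      = (inEdges G P).ncard + L.length.choose 2
        + (L.map (fun a => (G.neighborFinset a ∩ P).card)).sum := by
  induction L with
  | nil => simp
  | cons a L ih =>
    have haL : a ∉ L := (List.nodup_cons.mp hnd).1
    have hnd' : L.Nodup := (List.nodup_cons.mp hnd).2
    have hadjL : L.Pairwise G.Adj := hadj.of_cons
    have hadja : ∀ b ∈ L, G.Adj a b := fun b hb => (List.pairwise_cons.mp hadj).1 b hb
    have hset : (a :: L).toFinset ∪ P = insert a (L.toFinset ∪ P) := by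
      simp [List.toFinset_cons, Finset.insert_union]
    have hanotin : a ∉ L.toFinset ∪ P := by
      simp only [Finset.mem_union, List.mem_toFinset]
      rintro (h | h)
      · exact haL h
      · exact hdisjP a (by simp) h
    rw [hset, ncard_inEdges_insert G hanotin, ih hnd' (fun b hb => hdisjP b (by simp [hb])) hadjL]
    have hintersplit : G.neighborFinset a ∩ (L.toFinset ∪ P)
        = (G.neighborFinset a ∩ L.toFinset) ∪ (G.neighborFinset a ∩ P) :=
      Finset.inter_union_distrib_left _ _ _
    have hdisj2 : Disjoint (G.neighborFinset a ∩ L.toFinset) (G.neighborFinset a ∩ P) := by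
      apply Finset.disjoint_left.mpr
      intro x hx hx'
      exact hdisjP x (by simp [List.mem_toFinset.mp (Finset.mem_inter.mp hx).2])
        (Finset.mem_inter.mp hx').2
    have hinterL : G.neighborFinset a ∩ L.toFinset = L.toFinset := by
      apply Finset.inter_eq_right.mpr
      intro b hb
      exact (SimpleGraph.mem_neighborFinset _ _ _).mpr (hadja b (List.mem_toFinset.mp hb))
    have hcardL : L.toFinset.card = L.length := List.toFinset_card_of_nodup hnd'
    rw [hintersplit, Finset.card_union_of_disjoint hdisj2, hinterL, hcardL]
    have hch : (L.length + 1).choose 2 = L.length.choose 2 + L.length := by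
      rw [Nat.choose_succ_succ]
      simp [Nat.choose_one_right]
      omega
    simp only [List.map_cons, List.sum_cons, List.length_cons, hch]
    omega



end Claim2Aux

open Claim2Aux

set_option maxHeartbeats 1600000 in
theorem claim2_large_NW2 {V : Type*} [Fintype V] [DecidableEq V] (G : SimpleGraph V)
    [DecidableRel G.Adj] (k p : ℕ) (hp : ramseyNumber k ≤ p) (v0 : V)
    (hNW2 : (p - 1) ^ 2 <
      ((Finset.univ \ G.neighborFinset v0).filter fun w =>
        ∃ u ∈ ((G.neighborFinset v0).filter fun u =>
          (G.neighborFinset u ∩ (Finset.univ \ G.neighborFinset v0)).card < p),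
        G.Adj u w).card) :
    HasKEdgeInducedSubgraph G k := by
  classical
  set V2f : Finset V := Finset.univ \ G.neighborFinset v0 with hV2f
  set W2f : Finset V := (G.neighborFinset v0).filter
      (fun u => (G.neighborFinset u ∩ V2f).card < p) with hW2f
  set T : Finset V := V2f.filter (fun w => ∃ u ∈ W2f, G.Adj u w) with hT
  have hNW2' : (p - 1) ^ 2 < T.card := hNW2
  -- basic membership facts
  have hW2fsub : ∀ u ∈ W2f, u ∈ G.neighborFinset v0 := by
    intro u hu; exact (Finset.mem_filter.mp hu).1
  have hW2fdeg : ∀ u ∈ W2f, (G.neighborFinset u ∩ V2f).card < p := by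
    intro u hu; exact (Finset.mem_filter.mp hu).2
  have hTV2 : ∀ w ∈ T, w ∉ G.neighborFinset v0 := by
    intro w hw
    have := (Finset.mem_filter.mp hw).1
    exact (Finset.mem_sdiff.mp this).2
  have hTcov : ∀ w ∈ T, ∃ u ∈ W2f, G.Adj u w := by
    intro w hw; exact (Finset.mem_filter.mp hw).2
  -- case k = 0
  rcases Nat.eq_zero_or_pos k with rfl | hk0
  · refine ⟨{v0}, ⟨v0, by simp⟩, ?_⟩
    have : inEdges G {v0} = ∅ := by
      apply inEdges_eq_empty
      intro a ha b hb
      rw [Finset.mem_singleton] at ha hb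
      subst ha; subst hb
      exact G.loopless.irrefl _
    show (inEdges G {v0}).ncard = 0
    rw [this, Set.ncard_empty]
  -- T is nonempty
  have hTne : T.Nonempty := Finset.card_pos.mp (by omega)
  obtain ⟨w₀, hw₀⟩ := hTne
  obtain ⟨u₀, hu₀W, hu₀adj⟩ := hTcov w₀ hw₀
  -- p ≥ 2
  have hp2 : 2 ≤ p := by
    by_contra hc
    have hple : p ≤ 1 := by omega
    have h1 : w₀ ∈ G.neighborFinset u₀ ∩ V2f := by
      rw [Finset.mem_inter, SimpleGraph.mem_neighborFinset]
      refine ⟨hu₀adj, (Finset.mem_filter.mp hw₀).1⟩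
    have h2 := hW2fdeg u₀ hu₀W
    have h3 : 1 ≤ (G.neighborFinset u₀ ∩ V2f).card := Finset.card_pos.mpr ⟨w₀, h1⟩
    omega
  -- case k = 1
  rcases Nat.lt_or_ge k 2 with hk1 | hk2
  · have hk : k = 1 := by omega
    subst hk
    have hne : u₀ ≠ w₀ := by
      intro h
      exact hTV2 w₀ hw₀ (h ▸ hW2fsub u₀ hu₀W)
    have hnotin : u₀ ∉ ({w₀} : Finset V) := by simp [hne]
    refine ⟨[u₀].toFinset ∪ {w₀}, ⟨u₀, by simp⟩, ?_⟩
    show (inEdges G ([u₀].toFinset ∪ {w₀})).ncard = 1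
    rw [ncard_inEdges_list_union G {w₀} [u₀] (by simp) (by simpa using hnotin)
      (List.pairwise_singleton _ _)]
    have he : inEdges G {w₀} = ∅ := by
      apply inEdges_eq_empty
      intro a ha b hb
      rw [Finset.mem_singleton] at ha hb
      subst ha; subst hb
      exact G.loopless.irrefl _
    have hi : G.neighborFinset u₀ ∩ {w₀} = {w₀} := by
      apply Finset.inter_eq_right.mpr
      intro x hx
      rw [Finset.mem_singleton] at hx
      subst hx
      exact (SimpleGraph.mem_neighborFinset _ _ _).mpr hu₀adj
    rw [he, Set.ncard_empty]
    simp [hi]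
  -- minimal cover
  have hfamne : (W2f.powerset.filter (fun C => ∀ w ∈ T, ∃ u ∈ C, G.Adj u w)).Nonempty := by
    refine ⟨W2f, ?_⟩
    rw [Finset.mem_filter, Finset.mem_powerset]
    exact ⟨le_refl _, hTcov⟩
  obtain ⟨C₀, hC₀mem, hC₀min⟩ := Finset.exists_min_image _ Finset.card hfamne
  rw [Finset.mem_filter, Finset.mem_powerset] at hC₀mem
  obtain ⟨hC₀sub, hC₀cov⟩ := hC₀mem
  -- private neighbors
  have hpriv : ∀ u, u ∈ C₀ → ∃ y, y ∈ T ∧ G.Adj u y ∧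
      ∀ u', u' ∈ C₀ → u' ≠ u → ¬ G.Adj u' y := by
    intro u hu
    by_contra hcon
    push_neg at hcon
    have herase : (C₀.erase u) ∈ W2f.powerset.filter (fun C => ∀ w ∈ T, ∃ u ∈ C, G.Adj u w) := by
      rw [Finset.mem_filter, Finset.mem_powerset]
      constructor
      · exact le_trans (Finset.erase_subset _ _) hC₀sub
      · intro w hw
        obtain ⟨u'', hu''C, hu''adj⟩ := hC₀cov w hw
        by_cases h : u'' = u
        · subst h
          obtain ⟨u', hu'C, hu'ne, hu'adj⟩ := hcon w hw hu''adj
          exact ⟨u', Finset.mem_erase.mpr ⟨hu'ne, hu'C⟩, hu'adj⟩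
        · exact ⟨u'', Finset.mem_erase.mpr ⟨h, hu''C⟩, hu''adj⟩
    have hle := hC₀min _ herase
    have hlt : (C₀.erase u).card < C₀.card := Finset.card_erase_lt_of_mem hu
    omega
  choose! xp hxpT hxpadj hxppriv using hpriv
  -- pendant facts
  have hxpnbr : ∀ u ∈ C₀, xp u ∉ G.neighborFinset v0 := by
    intro u hu
    exact hTV2 _ (hxpT u hu)
  -- cardinality lower bound on C₀
  have hC₀p : p ≤ C₀.card := by
    have hTsub : T ⊆ C₀.biUnion (fun u => G.neighborFinset u ∩ V2f) := by
      intro w hw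
      obtain ⟨u, huC, huadj⟩ := hC₀cov w hw
      refine Finset.mem_biUnion.mpr ⟨u, huC, ?_⟩
      rw [Finset.mem_inter, SimpleGraph.mem_neighborFinset]
      exact ⟨huadj, (Finset.mem_filter.mp hw).1⟩
    have h1 : T.card ≤ ∑ u ∈ C₀, (G.neighborFinset u ∩ V2f).card :=
      le_trans (Finset.card_le_card hTsub) (Finset.card_biUnion_le)
    have h2 : ∑ u ∈ C₀, (G.neighborFinset u ∩ V2f).card ≤ C₀.card * (p - 1) := by
      calc ∑ u ∈ C₀, (G.neighborFinset u ∩ V2f).card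
          ≤ ∑ _u ∈ C₀, (p-1) :=
            Finset.sum_le_sum (fun u hu => by have := hW2fdeg u (hC₀sub hu); omega)
        _ = C₀.card * (p-1) := by rw [Finset.sum_const, smul_eq_mul]
    have hsq : (p-1)^2 = (p-1)*(p-1) := by ring
    have h3 : (p-1) * (p-1) < C₀.card * (p-1) := by omega
    have h4 : p - 1 < C₀.card := by
      by_contra hc
      push_neg at hc
      have := Nat.mul_le_mul_right (p-1) hc
      omega
    omega
  -- case k = 2 : path v0 - u - w  (w ≠ v0 taken from T)
  rcases Nat.lt_or_ge k 3 with hk3 | hk3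
  · have hk : k = 2 := by omega
    subst hk
    have hT2 : 2 ≤ T.card := by
      have : 1 ≤ (p-1)^2 := by
        have : 1 ≤ p - 1 := by omega
        nlinarith
      omega
    have hTe : (T.erase v0).Nonempty := by
      by_cases h : v0 ∈ T
      · refine Finset.card_pos.mp ?_
        rw [Finset.card_erase_of_mem h]
        omega
      · refine Finset.card_pos.mp ?_
        rw [Finset.erase_eq_of_notMem h]
        omega
    obtain ⟨w₁, hw₁e⟩ := hTe
    have hw₁v0 : w₁ ≠ v0 := (Finset.mem_erase.mp hw₁e).1
    have hw₁T : w₁ ∈ T := (Finset.mem_erase.mp hw₁e).2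
    obtain ⟨u₁, hu₁W, hu₁adj⟩ := hTcov w₁ hw₁T
    have hu₁nbr : u₁ ∈ G.neighborFinset v0 := hW2fsub u₁ hu₁W
    have hw₁nbr : w₁ ∉ G.neighborFinset v0 := hTV2 w₁ hw₁T
    have hv0u₁ : v0 ≠ u₁ := by
      intro h
      rw [SimpleGraph.mem_neighborFinset] at hu₁nbr
      exact G.loopless.irrefl v0 (h ▸ hu₁nbr)
    have hu₁w₁ : u₁ ≠ w₁ := by
      intro h
      exact hw₁nbr (h ▸ hu₁nbr)
    refine ⟨[v0, u₁].toFinset ∪ {w₁}, ⟨v0, by simp⟩, ?_⟩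
    show (inEdges G ([v0, u₁].toFinset ∪ {w₁})).ncard = 2
    rw [ncard_inEdges_list_union G {w₁} [v0, u₁] (by simp [hv0u₁]) ?_ ?_]
    · have he : inEdges G {w₁} = ∅ := by
        apply inEdges_eq_empty
        intro a ha b hb
        rw [Finset.mem_singleton] at ha hb
        subst ha; subst hb
        exact G.loopless.irrefl _
      have hi1 : G.neighborFinset v0 ∩ {w₁} = ∅ := by
        rw [Finset.eq_empty_iff_forall_notMem]
        intro x hx
        rw [Finset.mem_inter, Finset.mem_singleton] at hx
        exact hw₁nbr (hx.2 ▸ hx.1)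
      have hi2 : G.neighborFinset u₁ ∩ {w₁} = {w₁} := by
        apply Finset.inter_eq_right.mpr
        intro x hx
        rw [Finset.mem_singleton] at hx
        subst hx
        exact (SimpleGraph.mem_neighborFinset _ _ _).mpr hu₁adj
      rw [he, Set.ncard_empty]
      simp [hi1, hi2]
    · intro a ha
      simp only [List.mem_cons, List.not_mem_nil, or_false] at ha
      rw [Finset.mem_singleton]
      rcases ha with rfl | rfl
      · exact fun h => hw₁v0 h.symm
      · exact fun h => hu₁w₁ h
    · refine List.pairwise_cons.mpr ⟨?_, List.pairwise_singleton _ _⟩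
      intro b hb
      simp only [List.mem_singleton] at hb
      subst hb
      rwa [← SimpleGraph.mem_neighborFinset]
  -- now k ≥ 3
  -- the Ramsey property holds at p
  have hps : RamseyProp k k p := by
    obtain ⟨N, hN⟩ := ramsey_exists k k
    have hne : Set.Nonempty {N : ℕ | RamseyProp k k N} := ⟨N, hN⟩
    have hmem : RamseyProp k k (sInf {N : ℕ | RamseyProp k k N}) := Nat.sInf_mem hne
    have hRle : ramseyNumber k ≤ p := hp
    have heq : ramseyNumber k = sInf {N : ℕ | RamseyProp k k N} := rfl
    rw [heq] at hRle
    intro W instW GW hcard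
    exact hmem W instW GW (le_trans hRle hcard)
  -- apply Ramsey to the induced graph on C₀ transported to `Fin n`
  set n := C₀.card with hn
  set f : Fin n → V := fun i => ((C₀.equivFin.symm i : {x // x ∈ C₀}) : V) with hf
  have hfinj : Function.Injective f := by
    intro a b hab
    exact C₀.equivFin.symm.injective (Subtype.val_injective hab)
  have hfC₀ : ∀ i, f i ∈ C₀ := fun i => (C₀.equivFin.symm i).2
  have hcardFin : p ≤ @Fintype.card (Fin n) (Fin.fintype n) := by
    rw [Fintype.card_fin]; exact hC₀p
  rcases hps (Fin n) _ (G.comap f) hcardFin with ⟨S, hScard, hSadj⟩ | ⟨S, hScard, hSadj⟩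
  · -- CLIQUE CASE
    set Q := S.image f with hQ
    have hQcard : Q.card = k := by rw [hQ, Finset.card_image_of_injective _ hfinj, hScard]
    have hQsub : Q ⊆ C₀ := by
      intro x hx
      obtain ⟨i, _, rfl⟩ := Finset.mem_image.mp hx
      exact hfC₀ i
    have hQadj : ∀ a ∈ Q, ∀ b ∈ Q, a ≠ b → G.Adj a b :=
      image_pairwise (R := G.Adj) hfinj hSadj
    have hQnbr : ∀ a ∈ Q, a ∈ G.neighborFinset v0 := fun a ha => hW2fsub a (hC₀sub (hQsub ha))
    -- arithmetic: k = C(j,2) + t with 3 ≤ j ≤ k, t < j, t ≤ k - j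
    obtain ⟨j, hj3, hjk, hCjk, hjk1, hjCj⟩ := exists_j k hk3
    have hjsucc : (j+1).choose 2 = j.choose 2 + j := by
      rw [Nat.choose_succ_succ]
      simp [Nat.choose_one_right]
      omega
    set t := k - j.choose 2 with ht
    have htj : t < j := by omega
    set N' := k - j with hN'
    have htN : t ≤ N' := by omega
    -- pool and base
    obtain ⟨WPool, hWPoolsub, hWPoolcard⟩ := Finset.exists_subset_card_eq
      (show N' ≤ Q.card by omega)
    set Base := Q \ WPool with hBase
    have hBasecard : Base.card = j := by
      rw [hBase, Finset.card_sdiff_of_subset hWPoolsub, hQcard, hWPoolcard]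
      omega
    set Lp := WPool.toList with hLp
    have hLpnd : Lp.Nodup := Finset.nodup_toList _
    have hLplen : Lp.length = N' := by rw [hLp, Finset.length_toList, hWPoolcard]
    have hLpmem : ∀ a ∈ Lp, a ∈ WPool := fun a ha => Finset.mem_toList.mp ha
    -- the chain function
    set h : ℕ → ℕ := fun σ => (inEdges G (((Lp.take σ).toFinset).image xp)).ncard with hhdef
    have h0 : h 0 = 0 := by
      simp only [hhdef, List.take_zero, List.toFinset_nil, Finset.image_empty]
      rw [inEdges_eq_empty G (by intro a ha; simp at ha), Set.ncard_empty]
    have hchain : ∀ σ, σ < N' → h (σ+1) ≤ h σ + σ := by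
      intro σ hσ
      have hσl : σ < Lp.length := by omega
      have htake : Lp.take (σ+1) = Lp.take σ ++ [Lp[σ]] := by
        rw [List.take_succ, List.getElem?_eq_getElem hσl]
        rfl
      set a := Lp[σ] with haa
      have haW : a ∈ WPool := hLpmem a (List.getElem_mem hσl)
      have hanotmem : a ∉ Lp.take σ := by
        have hnd2 : (Lp.take (σ+1)).Nodup := hLpnd.sublist (List.take_sublist _ _)
        rw [htake] at hnd2
        intro hmem
        exact (List.nodup_append'.mp hnd2).2.2 hmem (by simp)
      have himg : ((Lp.take (σ+1)).toFinset).image xp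
          = insert (xp a) (((Lp.take σ).toFinset).image xp) := by
        rw [htake, List.toFinset_append,
          show ([a] : List V).toFinset = {a} from by simp, Finset.image_union,
          Finset.image_singleton, Finset.union_comm, ← Finset.insert_eq]
      have hxpanotin : xp a ∉ ((Lp.take σ).toFinset).image xp := by
        intro hmem
        obtain ⟨w, hw, heq⟩ := Finset.mem_image.mp hmem
        have hwW : w ∈ WPool := hLpmem w (List.take_subset _ _ (List.mem_toFinset.mp hw))
        have hwa : w ≠ a := fun heq2 => hanotmem (heq2 ▸ List.mem_toFinset.mp hw)
        have hadj : G.Adj w (xp w) := hxpadj w (hQsub (hWPoolsub hwW))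
        rw [heq] at hadj
        exact hxppriv a (hQsub (hWPoolsub haW)) w (hQsub (hWPoolsub hwW)) hwa hadj
      have hstep : h (σ+1) = h σ + ((G.neighborFinset (xp a) ∩
          (((Lp.take σ).toFinset).image xp)).card) := by
        simp only [hhdef, himg]
        exact ncard_inEdges_insert G hxpanotin
      have hbound : (G.neighborFinset (xp a) ∩ (((Lp.take σ).toFinset).image xp)).card ≤ σ := by
        calc (G.neighborFinset (xp a) ∩ (((Lp.take σ).toFinset).image xp)).card
            ≤ (((Lp.take σ).toFinset).image xp).card :=
              Finset.card_le_card Finset.inter_subset_right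
        _ ≤ ((Lp.take σ).toFinset).card := Finset.card_image_le
        _ ≤ (Lp.take σ).length := (Lp.take σ).toFinset_card_le
        _ ≤ σ := by rw [List.length_take]; omega
      omega
    -- find the right stopping point
    obtain ⟨σs, hσsN, hσsval, hmσ⟩ := exists_stop h N' t h0 hchain htN
    set m := t - h σs with hm
    have hmj : m ≤ j := by omega
    -- choose the pieces
    set W := (Lp.take σs).toFinset with hW
    have hWsub : W ⊆ WPool := by
      intro x hx
      exact hLpmem x (List.take_subset _ _ (List.mem_toFinset.mp hx))
    have hWcard : W.card = σs := by
      rw [hW, List.toFinset_card_of_nodup (hLpnd.sublist (List.take_sublist _ _))]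
      rw [List.length_take]
      omega
    obtain ⟨O, hOsub, hOcard⟩ := Finset.exists_subset_card_eq (show m ≤ W.card by omega)
    obtain ⟨B, hBsub, hBcard⟩ := Finset.exists_subset_card_eq
      (show j - m ≤ Base.card by omega)
    have hOQ : O ⊆ Q := fun x hx => hWPoolsub (hWsub (hOsub hx))
    have hBQ : B ⊆ Q := fun x hx => (Finset.mem_sdiff.mp (hBsub hx)).1
    have hOBdisj : Disjoint O B := by
      rw [Finset.disjoint_left]
      intro x hxO hxB
      exact (Finset.mem_sdiff.mp (hBsub hxB)).2 (hWsub (hOsub hxO))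
    have hOBcard : (O ∪ B).card = j := by
      rw [Finset.card_union_of_disjoint hOBdisj, hOcard, hBcard]
      omega
    set L := (O ∪ B).toList with hL
    have hLnd : L.Nodup := Finset.nodup_toList _
    have hLlen : L.length = j := by rw [hL, Finset.length_toList, hOBcard]
    have hLmem : ∀ a ∈ L, a ∈ O ∪ B := fun a ha => Finset.mem_toList.mp ha
    have hLQ : ∀ a ∈ L, a ∈ Q := by
      intro a ha
      rcases Finset.mem_union.mp (hLmem a ha) with h' | h'
      · exact hOQ h'
      · exact hBQ h'
    have hLadj : L.Pairwise G.Adj := by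
      refine List.Pairwise.imp_of_mem ?_ hLnd
      intro a b ha hb hne
      exact hQadj a (hLQ a ha) b (hLQ b hb) hne
    have hLdisjP : ∀ a ∈ L, a ∉ W.image xp := by
      intro a ha hmem
      obtain ⟨w, hw, heq⟩ := Finset.mem_image.mp hmem
      have : xp w ∉ G.neighborFinset v0 := hxpnbr w (hQsub (hWPoolsub (hWsub hw)))
      rw [heq] at this
      exact this (hQnbr a (hLQ a ha))
    -- final count
    refine ⟨L.toFinset ∪ W.image xp, ?_, ?_⟩
    · obtain ⟨x, hx⟩ := Finset.card_pos.mp (show 0 < (O ∪ B).card by omega)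
      exact ⟨x, Finset.mem_union_left _ (by rw [List.mem_toFinset, hL, Finset.mem_toList]; exact hx)⟩
    show (inEdges G (L.toFinset ∪ W.image xp)).ncard = k
    rw [ncard_inEdges_list_union G (W.image xp) L hLnd hLdisjP hLadj]
    have hpend : (inEdges G (W.image xp)).ncard = h σs := rfl
    have hsum : (L.map (fun a => (G.neighborFinset a ∩ W.image xp).card)).sum = m := by
      rw [hL, Finset.sum_map_toList, Finset.sum_union hOBdisj]
      have hO1 : ∀ a ∈ O, (G.neighborFinset a ∩ W.image xp).card = 1 := by
        intro a haO
        have haC : a ∈ C₀ := hQsub (hOQ haO)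
        have hset2 : G.neighborFinset a ∩ W.image xp = {xp a} := by
          ext y
          simp only [Finset.mem_inter, SimpleGraph.mem_neighborFinset, Finset.mem_image,
            Finset.mem_singleton]
          constructor
          · rintro ⟨hadj, w, hwW, rfl⟩
            have hwC : w ∈ C₀ := hQsub (hWPoolsub (hWsub hwW))
            by_cases hwa : w = a
            · rw [hwa]
            · exact absurd hadj (hxppriv w hwC a haC (fun hc => hwa hc.symm))
          · rintro rfl
            exact ⟨hxpadj a haC, a, hOsub haO, rfl⟩
        rw [hset2, Finset.card_singleton]
      have hB0 : ∀ a ∈ B, (G.neighborFinset a ∩ W.image xp).card = 0 := by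
        intro a haB
        have haC : a ∈ C₀ := hQsub (hBQ haB)
        rw [Finset.card_eq_zero, Finset.eq_empty_iff_forall_notMem]
        intro y hy
        rw [Finset.mem_inter, SimpleGraph.mem_neighborFinset] at hy
        obtain ⟨hadj, hyim⟩ := hy
        obtain ⟨w, hwW, rfl⟩ := Finset.mem_image.mp hyim
        have hwC : w ∈ C₀ := hQsub (hWPoolsub (hWsub hwW))
        have hwa : w ≠ a := by
          intro hc
          subst hc
          exact (Finset.mem_sdiff.mp (hBsub haB)).2 (hWsub hwW)
        exact absurd hadj (hxppriv w hwC a haC (fun hc => hwa hc.symm))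
      rw [Finset.sum_congr rfl hO1, Finset.sum_congr rfl hB0]
      simp [hOcard]
    rw [hpend, hsum, hLlen]
    omega
  · -- INDEPENDENT CASE : star at v0
    set I := S.image f with hI
    have hIcard : I.card = k := by rw [hI, Finset.card_image_of_injective _ hfinj, hScard]
    have hIsub : I ⊆ C₀ := by
      intro x hx
      obtain ⟨i, _, rfl⟩ := Finset.mem_image.mp hx
      exact hfC₀ i
    have hInadj : ∀ a ∈ I, ∀ b ∈ I, a ≠ b → ¬ G.Adj a b :=
      image_pairwise (R := fun a b => ¬ G.Adj a b) hfinj hSadj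
    have hv0I : v0 ∉ I := by
      intro hmem
      have := hW2fsub v0 (hC₀sub (hIsub hmem))
      rw [SimpleGraph.mem_neighborFinset] at this
      exact G.loopless.irrefl v0 this
    refine ⟨[v0].toFinset ∪ I, ⟨v0, by simp⟩, ?_⟩
    show (inEdges G ([v0].toFinset ∪ I)).ncard = k
    rw [ncard_inEdges_list_union G I [v0] (by simp) (by simpa using hv0I)
      (List.pairwise_singleton _ _)]
    have he : inEdges G I = ∅ := by
      apply inEdges_eq_empty
      intro a ha b hb
      by_cases hab : a = b
      · subst hab; exact fun hc => G.loopless.irrefl a hc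
      · exact hInadj a ha b hb hab
    have hi : G.neighborFinset v0 ∩ I = I := by
      apply Finset.inter_eq_right.mpr
      intro x hx
      exact hW2fsub x (hC₀sub (hIsub hx))
    rw [he, Set.ncard_empty]
    simp [hi, hIcard]
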